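/- Let B be a finite-dimensional K-algebra with a subalgebra A₀ such that B = A₀ ⊕ J(B) as K-vector spaces, and let H ⊆ J(B) be a two-sided ideal of B that is maximal among B-sub-bimodules properly contained in J(B). Then A = A₀ ⊕ H is a maximal subalgebra of B. -/

import Mathlib

set_option maxHeartbeats 1000000


/-- If `B = A₀ ⊕ J(B)` as `K`-vector spaces for a subalgebra `A₀`, and `H` is a two-sided
ideal of `B` maximal among `B`-sub-bimodules properly contained in `J(B)`, then
`A₀ ⊕ H` is a maximal subalgebra of `B`. -/
theorem stmt11 {K B : Type*} [Field K] [Ring B] [Algebra K B] [FiniteDimensional K B]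
    (A₀ : Subalgebra K B)
    (hcompl : IsCompl (Subalgebra.toSubmodule A₀)
      (Submodule.restrictScalars K (Ideal.jacobson (⊥ : Ideal B))))
    (H : Ideal B) (hHr : ∀ x ∈ H, ∀ b : B, x * b ∈ H)
    (hHJ : H < Ideal.jacobson (⊥ : Ideal B))
    (hmaxH : ∀ H' : Ideal B, (∀ x ∈ H', ∀ b : B, x * b ∈ H') →
      H ≤ H' → H' < Ideal.jacobson (⊥ : Ideal B) → H' = H) :
    ∃ A : Subalgebra K B,
      Subalgebra.toSubmodule A = Subalgebra.toSubmodule A₀ ⊔ Submodule.restrictScalars K H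
      ∧ IsCoatom A := by
  classical
  set J : Ideal B := Ideal.jacobson (⊥ : Ideal B) with hJdef
  -- J is closed under right multiplication
  have hJr : ∀ x ∈ J, ∀ b : B, x * b ∈ J := by
    intro x hx b
    exact (Ideal.jacobson (⊥ : Ideal B)).mul_mem_right b hx
  -- elements of J have left quasi-inverses
  have hinv : ∀ j ∈ J, ∃ z : B, z * (1 - j) = 1 := by
    intro j hj
    obtain ⟨z, hz⟩ := Ideal.mem_jacobson_iff.mp hj (-1)
    rw [Ideal.mem_bot, sub_eq_zero] at hz
    refine ⟨z, ?_⟩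
    calc z * (1 - j) = z * -1 * j + z := by noncomm_ring
    _ = 1 := hz
  -- decomposition of any element of B
  have hdecomp : ∀ b : B, ∃ a₀ ∈ A₀, ∃ j ∈ J, b = a₀ + j := by
    intro b
    have hb : b ∈ Subalgebra.toSubmodule A₀ ⊔ Submodule.restrictScalars K J := by
      rw [codisjoint_iff.mp hcompl.codisjoint]; trivial
    obtain ⟨u, hu, v, hv, huv⟩ := Submodule.mem_sup.mp hb
    exact ⟨u, hu, v, hv, huv.symm⟩
  have hdisj : ∀ x : B, x ∈ A₀ → x ∈ J → x = 0 := by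
    intro x h1 h2
    have : x ∈ Subalgebra.toSubmodule A₀ ⊓ Submodule.restrictScalars K J := ⟨h1, h2⟩
    simpa using hcompl.disjoint.le_bot this
  -- the submodule A₀ ⊕ H
  set S : Submodule K B := Subalgebra.toSubmodule A₀ ⊔ Submodule.restrictScalars K H with hSdef
  have hA₀S : ∀ x ∈ A₀, x ∈ S := fun x hx =>
    (le_sup_left : Subalgebra.toSubmodule A₀ ≤ S) hx
  have hHS : ∀ x ∈ H, x ∈ S := fun x hx =>
    (le_sup_right : Submodule.restrictScalars K H ≤ S) hx
  have honeS : (1 : B) ∈ S := hA₀S 1 A₀.one_mem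
  have hmulS : ∀ x y : B, x ∈ S → y ∈ S → x * y ∈ S := by
    intro x y hx hy
    obtain ⟨a, ha, h, hh, rfl⟩ := Submodule.mem_sup.mp hx
    obtain ⟨a', ha', h', hh', rfl⟩ := Submodule.mem_sup.mp hy
    have key : (a + h) * (a' + h') = a * a' + (a * h' + (h * a' + h * h')) := by noncomm_ring
    rw [key]
    refine S.add_mem (hA₀S _ (A₀.mul_mem ha ha')) (hHS _ ?_)
    exact H.add_mem (H.mul_mem_left a hh') (H.add_mem (hHr h hh a') (H.mul_mem_left h hh'))
  set A : Subalgebra K B := S.toSubalgebra honeS hmulS with hAdef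
  have hAS : Subalgebra.toSubmodule A = S := Submodule.toSubalgebra_toSubmodule S honeS hmulS
  have hmemA : ∀ x : B, x ∈ A ↔ x ∈ S := fun x => Iff.rfl
  -- J * J ≤ H
  have hJJle : J * J ≤ J := Ideal.mul_le_left
  have hJJr : ∀ m ∈ J * J, ∀ b : B, m * b ∈ J * J := by
    intro m hm b
    refine Submodule.smul_induction_on hm ?_ ?_
    · intro r hr n hn
      rw [smul_eq_mul, mul_assoc]
      exact Ideal.mul_mem_mul hr (hJr n hn b)
    · intro x y hx hy
      rw [add_mul]; exact Ideal.add_mem _ hx hy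
  have hJJH : J * J ≤ H := by
    by_cases hc : H ⊔ J * J = J
    · -- Nakayama-style contradiction
      exfalso
      have hNK : IsNoetherian K B := IsNoetherian.iff_fg.mpr inferInstance
      have hNB : IsNoetherian B B := isNoetherian_of_tower K hNK
      have key : ∀ n : ℕ, ∀ s : Finset B, s.card ≤ n →
          Ideal.span ↑s ⊔ H = J → J ≤ H := by
        intro n
        induction n with
        | zero =>
          intro s hcard hs
          rw [Nat.le_zero, Finset.card_eq_zero] at hcard
          subst hcard
          rw [Finset.coe_empty, Ideal.span_empty, bot_sup_eq] at hs
          exact hs.symm.le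
        | succ n ih =>
          intro s hcard hs
          rcases s.eq_empty_or_nonempty with rfl | ⟨a, ha⟩
          · rw [Finset.coe_empty, Ideal.span_empty, bot_sup_eq] at hs
            exact hs.symm.le
          · set s' := s.erase a with hs'def
            set ρ : B →ₗ[B] B :=
              DistribMulAction.toLinearMap B (S := Bᵐᵒᵖ) B (MulOpposite.op a) with hρdef
            have hρ : ∀ x : B, ρ x = x * a := fun x => rfl
            set N' : Ideal B := Ideal.span ↑s' ⊔ H with hN'def
            set T : Ideal B := Submodule.map ρ J ⊔ N' with hTdef
            have hHT : H ≤ T := le_trans le_sup_right (le_sup_right : N' ≤ T)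
            have huniv : ∀ u ∈ Ideal.span (↑s : Set B), ∀ r ∈ J, r * u ∈ T := by
              intro u hu
              induction hu using Submodule.span_induction with
              | mem b hb =>
                intro r hrJ
                by_cases hba : b = a
                · subst hba
                  refine (le_sup_left : Submodule.map ρ J ≤ T) ?_
                  exact ⟨r, hrJ, (hρ r).symm ▸ rfl⟩
                · have hbs' : b ∈ s' := Finset.mem_erase.mpr ⟨hba, hb⟩
                  exact (le_sup_right : N' ≤ T)
                    ((le_sup_left : Ideal.span ↑s' ≤ N')
                      (Ideal.mul_mem_left _ r (Ideal.subset_span hbs')))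
              | zero => intro r _; rw [mul_zero]; exact T.zero_mem
              | add x y hx hy px py =>
                intro r hr; rw [mul_add]; exact T.add_mem (px r hr) (py r hr)
              | smul c x hx px =>
                intro r hr
                rw [smul_eq_mul, ← mul_assoc]
                exact px (r * c) (hJr r hr c)
            have hT : ∀ m ∈ J * J, m ∈ T := by
              intro m hm
              refine Submodule.smul_induction_on hm ?_ ?_
              · intro r hr x hx
                rw [smul_eq_mul]
                have hx' : x ∈ Ideal.span ↑s ⊔ H := hs ▸ hx
                obtain ⟨u, hu, v, hv, rfl⟩ := Submodule.mem_sup.mp hx'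
                rw [mul_add]
                exact T.add_mem (huniv u hu r hr) (hHT (H.mul_mem_left r hv))
              · intro x y hx hy; exact T.add_mem hx hy
            have haJ : a ∈ J :=
              hs ▸ Submodule.mem_sup_left (Ideal.subset_span ha)
            have haT : a ∈ T := by
              have : a ∈ H ⊔ J * J := by rw [hc]; exact haJ
              obtain ⟨h, hh, m, hm, rfl⟩ := Submodule.mem_sup.mp this
              exact T.add_mem (hHT hh) (hT m hm)
            obtain ⟨y, hy, z, hz, hyz⟩ := Submodule.mem_sup.mp haT
            obtain ⟨j, hjJ, hj⟩ := Submodule.mem_map.mp hy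
            obtain ⟨w, hw⟩ := hinv j hjJ
            have haN' : a ∈ N' := by
              have h1 : (1 - j) * a = z := by
                have hyja : y = j * a := by rw [← hj, hρ]
                rw [sub_mul, one_mul, ← hyja, ← hyz]
                abel
              have h2 : a = w * ((1 - j) * a) := by rw [← mul_assoc, hw, one_mul]
              rw [h2, h1]
              exact Ideal.mul_mem_left _ w hz
            have hs2 : Ideal.span (↑s' : Set B) ⊔ H = J := by
              apply le_antisymm
              · rw [← hs]
                exact sup_le_sup_right
                  (Ideal.span_mono (by exact_mod_cast Finset.erase_subset a s)) H
              · rw [← hs]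
                refine sup_le ?_ le_sup_right
                rw [Ideal.span_le]
                intro b hb
                by_cases hba : b = a
                · subst hba; exact haN'
                · exact (le_sup_left : Ideal.span ↑s' ≤ N')
                    (Ideal.subset_span (Finset.mem_erase.mpr ⟨hba, hb⟩))
            refine ih s' ?_ hs2
            have hclt : s'.card < s.card := by
              rw [hs'def]; exact Finset.card_erase_lt_of_mem ha
            omega
      obtain ⟨s₀, hs₀⟩ := IsNoetherian.noetherian (R := B) (M := B) J
      have hJH : J ≤ H := by
        refine key s₀.card s₀ le_rfl ?_
        rw [show Ideal.span (↑s₀ : Set B) = J from hs₀]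
        exact sup_eq_left.mpr hHJ.le
      exact hHJ.not_ge hJH
    · have hlt : H ⊔ J * J < J := lt_of_le_of_ne (sup_le hHJ.le hJJle) hc
      have hr' : ∀ x ∈ H ⊔ J * J, ∀ b : B, x * b ∈ H ⊔ J * J := by
        intro x hx b
        obtain ⟨h, hh, m, hm, rfl⟩ := Submodule.mem_sup.mp hx
        rw [add_mul]
        exact Submodule.add_mem _ (Submodule.mem_sup_left (hHr h hh b))
          (Submodule.mem_sup_right (hJJr m hm b))
      have heq : H ⊔ J * J = H := hmaxH _ hr' le_sup_left hlt
      exact le_trans le_sup_right heq.le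
  refine ⟨A, hAS, ?_, ?_⟩
  · -- A ≠ ⊤
    obtain ⟨x0, hx0J, hx0H⟩ := SetLike.exists_of_lt hHJ
    intro htop
    have hx0S : x0 ∈ S := by rw [← hAS, htop]; trivial
    obtain ⟨u, hu, v, hv, huv⟩ := Submodule.mem_sup.mp hx0S
    have hvH : v ∈ H := hv
    have huJ : u ∈ J := by
      have : u = x0 - v := by rw [← huv]; abel
      rw [this]
      exact J.sub_mem hx0J (hHJ.le hvH)
    have hu0 : u = 0 := hdisj u hu huJ
    apply hx0H
    rw [← huv, hu0, zero_add]
    exact hvH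
  · -- maximality
    intro C hAC
    have hA₀C : ∀ x ∈ A₀, x ∈ C := fun x hx => hAC.le ((hmemA x).mpr (hA₀S x hx))
    have hHC : ∀ x ∈ H, x ∈ C := fun x hx => hAC.le ((hmemA x).mpr (hHS x hx))
    set H' : Ideal B :=
      { carrier := {x | x ∈ C ∧ x ∈ J}
        add_mem' := fun hx hy => ⟨C.add_mem hx.1 hy.1, J.add_mem hx.2 hy.2⟩
        zero_mem' := ⟨C.zero_mem, J.zero_mem⟩
        smul_mem' := by
          intro b x hx
          obtain ⟨a₀, ha₀, j, hj, rfl⟩ := hdecomp b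
          simp only [smul_eq_mul, Set.mem_setOf_eq] at hx ⊢
          rw [add_mul]
          have h1C : a₀ * x ∈ C := C.mul_mem (hA₀C a₀ ha₀) hx.1
          have h1J : a₀ * x ∈ J := J.mul_mem_left a₀ hx.2
          have h2H : j * x ∈ H := hJJH (Ideal.mul_mem_mul hj hx.2)
          exact ⟨C.add_mem h1C (hHC _ h2H), J.add_mem h1J (hHJ.le h2H)⟩ } with hH'def
    have hH'mem : ∀ x : B, x ∈ H' ↔ x ∈ C ∧ x ∈ J := fun x => Iff.rfl
    have hH'r : ∀ x ∈ H', ∀ b : B, x * b ∈ H' := by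
      intro x hx b
      obtain ⟨hxC, hxJ⟩ := (hH'mem x).mp hx
      obtain ⟨a₀, ha₀, j, hj, rfl⟩ := hdecomp b
      rw [mul_add]
      have h1C : x * a₀ ∈ C := C.mul_mem hxC (hA₀C a₀ ha₀)
      have h1J : x * a₀ ∈ J := hJr x hxJ a₀
      have h2H : x * j ∈ H := hJJH (Ideal.mul_mem_mul hxJ hj)
      exact (hH'mem _).mpr
        ⟨C.add_mem h1C (hHC _ h2H), J.add_mem h1J (hHJ.le h2H)⟩
    by_cases hc2 : H' = J
    · have hJC : ∀ x ∈ J, x ∈ C := by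
        intro x hx
        have : x ∈ H' := hc2.symm ▸ hx
        exact ((hH'mem x).mp this).1
      rw [eq_top_iff]
      intro b _
      obtain ⟨a₀, ha₀, j, hj, rfl⟩ := hdecomp b
      exact C.add_mem (hA₀C a₀ ha₀) (hJC j hj)
    · exfalso
      have hlt : H' < J := lt_of_le_of_ne (fun x hx => hx.2) hc2
      have hHleH' : H ≤ H' := fun x hx => (hH'mem x).mpr ⟨hHC x hx, hHJ.le hx⟩
      have heq : H' = H := hmaxH H' hH'r hHleH' hlt
      apply hAC.not_ge
      intro c hcC
      obtain ⟨a₀, ha₀, j, hj, hc⟩ := hdecomp c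
      have hjC : j ∈ C := by
        have : j = c - a₀ := by rw [hc]; abel
        rw [this]
        exact C.sub_mem hcC (hA₀C a₀ ha₀)
      have hjH : j ∈ H := by
        rw [← heq]
        exact (hH'mem j).mpr ⟨hjC, hj⟩
      rw [hmemA, hc]
      exact S.add_mem (hA₀S a₀ ha₀) (hHS j hjH)
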